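/- Let p₁ be a positive integer, m ≥ 2, and I₁ = (x^{p₁}, y^{p₁})(x^{(m+1)p₁}, y^{(m+1)p₁}) in K[x,y]. For every k ≥ m, I₁^k = (x^{p₁}, y^{p₁})^{k(m+2)}. -/

import Mathlib

open Pointwise

open MvPolynomial

lemma decomp (m k a b : ℕ) (hmk : m ≤ k) (hab : a + b = k * (m + 2)) :
    ∃ s t u v : ℕ, s + t + u + v = k ∧ s * (m + 2) + t + u * (m + 1) = a ∧
      t * (m + 1) + u + v * (m + 2) = b := by
  set j := min k (a / (m + 1)) with hj
  have hjk : j ≤ k := min_le_left _ _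
  have h1 : j * (m + 1) ≤ a := by
    rcases min_cases k (a / (m+1)) with ⟨h, _⟩ | ⟨h, _⟩
    · calc j * (m+1) = k * (m+1) := by rw [hj, h]
        _ ≤ (a / (m+1)) * (m+1) := Nat.mul_le_mul_right _ (by omega)
        _ ≤ a := Nat.div_mul_le_self _ _
    · rw [hj, h]; exact Nat.div_mul_le_self _ _
  set d := a - j * (m + 1) with hd
  have h2 : d ≤ k := by
    rcases min_cases k (a / (m+1)) with ⟨h, hle⟩ | ⟨h, hlt⟩
    · have hk2 : k * (m + 2) = k * (m + 1) + k := by ring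
      have : a ≤ k * (m+1) + k := by omega
      rw [hd, hj, h]; omega
    · have hdm := Nat.div_add_mod a (m+1)
      have hmod : a % (m+1) < m + 1 := Nat.mod_lt _ (by omega)
      have : d = a % (m+1) := by rw [hd, hj, h, Nat.mul_comm]; omega
      omega
  refine ⟨min d j, d - min d j, j - min d j, k - j - (d - min d j), by omega, ?_, ?_⟩
  · have e1 : (min d j) * (m + 2) + (d - min d j) + (j - min d j) * (m + 1)
        = (min d j + (j - min d j)) * (m + 1) + (min d j + (d - min d j)) := by ring
    rw [e1, show min d j + (j - min d j) = j by omega,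
      show min d j + (d - min d j) = d by omega]
    omega
  · have e2 : (d - min d j) * (m + 1) + (j - min d j) + (k - j - (d - min d j)) * (m + 2)
        + ((min d j) * (m + 2) + (d - min d j) + (j - min d j) * (m + 1))
        = (min d j + (d - min d j) + (j - min d j) + (k - j - (d - min d j))) * (m + 2) := by
      ring
    rw [show min d j + (d - min d j) + (j - min d j) + (k - j - (d - min d j)) = k by omega] at e2
    have e3 : (min d j) * (m + 2) + (d - min d j) + (j - min d j) * (m + 1) = a := by
      have e1 : (min d j) * (m + 2) + (d - min d j) + (j - min d j) * (m + 1)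
          = (min d j + (j - min d j)) * (m + 1) + (min d j + (d - min d j)) := by ring
      rw [e1, show min d j + (j - min d j) = j by omega,
        show min d j + (d - min d j) = d by omega]
      omega
    omega

lemma span_pair_pow_le {R : Type*} [CommRing R] (f g : R) (n : ℕ) (I : Ideal R)
    (h : ∀ s t : ℕ, s + t = n → f ^ s * g ^ t ∈ I) :
    Ideal.span {f, g} ^ n ≤ I := by
  have key : ∀ n : ℕ, Ideal.span {f, g} ^ n ≤
      Ideal.span ({x | ∃ a b : ℕ, a + b = n ∧ x = f ^ a * g ^ b} : Set R) := by
    intro n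
    induction n with
    | zero =>
      rw [pow_zero, Ideal.one_eq_top, top_le_iff, Ideal.eq_top_iff_one]
      exact Ideal.subset_span ⟨0, 0, rfl, by simp⟩
    | succ n ih =>
      calc Ideal.span {f, g} ^ (n+1) = Ideal.span {f, g} * Ideal.span {f, g} ^ n := by
            rw [pow_succ, mul_comm]
        _ ≤ Ideal.span {f, g} * Ideal.span ({x | ∃ a b : ℕ, a + b = n ∧ x = f ^ a * g ^ b} : Set R) :=
            Ideal.mul_mono_right ih
        _ = Ideal.span (({f, g} : Set R) * {x | ∃ a b : ℕ, a + b = n ∧ x = f ^ a * g ^ b}) :=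
            (Ideal.span_mul_span' _ _)
        _ ≤ _ := by
            rw [Ideal.span_le]
            rintro x ⟨u, hu, v, ⟨a, b, hab, rfl⟩, rfl⟩
            rcases hu with rfl | rfl
            · exact Ideal.subset_span ⟨a + 1, b, by omega, by ring⟩
            · exact Ideal.subset_span ⟨a, b + 1, by omega, by ring⟩
  refine le_trans (key n) ?_
  rw [Ideal.span_le]
  rintro x ⟨a, b, hab, rfl⟩
  exact h a b hab

theorem stmt5 (K : Type*) [Field K] (m p1 : ℕ) (hm : 2 ≤ m) (hp1 : 0 < p1) :
    ∀ k : ℕ, m ≤ k →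
      (Ideal.span {(X 0 : MvPolynomial (Fin 2) K) ^ p1, X 1 ^ p1} *
        Ideal.span {(X 0 : MvPolynomial (Fin 2) K) ^ ((m + 1) * p1), X 1 ^ ((m + 1) * p1)}) ^ k =
      Ideal.span {(X 0 : MvPolynomial (Fin 2) K) ^ p1, X 1 ^ p1} ^ (k * (m + 2)) := by
  intro k hk
  set J : Ideal (MvPolynomial (Fin 2) K) := Ideal.span {X 0 ^ p1, X 1 ^ p1} with hJ
  set A : Ideal (MvPolynomial (Fin 2) K) :=
    Ideal.span {X 0 ^ ((m + 1) * p1), X 1 ^ ((m + 1) * p1)} with hA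
  have hx0J : (X 0 : MvPolynomial (Fin 2) K) ^ p1 ∈ J := Ideal.subset_span (by simp)
  have hx1J : (X 1 : MvPolynomial (Fin 2) K) ^ p1 ∈ J := Ideal.subset_span (by simp)
  have hx0A : (X 0 : MvPolynomial (Fin 2) K) ^ ((m + 1) * p1) ∈ A := Ideal.subset_span (by simp)
  have hx1A : (X 1 : MvPolynomial (Fin 2) K) ^ ((m + 1) * p1) ∈ A := Ideal.subset_span (by simp)
  apply le_antisymm
  · -- (J*A)^k ≤ J^(k*(m+2))
    have hAle : A ≤ J ^ (m + 1) := by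
      rw [hA, Ideal.span_le]
      rintro x (rfl | rfl)
      · rw [show (m+1)*p1 = p1*(m+1) by ring, pow_mul]
        exact Ideal.pow_mem_pow hx0J _
      · rw [show (m+1)*p1 = p1*(m+1) by ring, pow_mul]
        exact Ideal.pow_mem_pow hx1J _
    have hJA : J * A ≤ J ^ (m + 2) := by
      calc J * A ≤ J * J ^ (m + 1) := Ideal.mul_mono_right hAle
        _ = J ^ (m + 2) := (pow_succ' J (m+1)).symm
    calc (J * A) ^ k ≤ (J ^ (m + 2)) ^ k := Ideal.pow_right_mono hJA k
      _ = J ^ (k * (m + 2)) := by rw [← pow_mul, mul_comm]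
  · -- J^(k*(m+2)) ≤ (J*A)^k
    apply span_pair_pow_le
    intro a b hab
    obtain ⟨s, t, u, v, hsum, ha, hb⟩ := decomp m k a b hk hab
    have memE1 : (X 0 : MvPolynomial (Fin 2) K) ^ ((m + 2) * p1) ∈ J * A := by
      rw [show (m+2)*p1 = p1 + (m+1)*p1 by ring, pow_add]
      exact Ideal.mul_mem_mul hx0J hx0A
    have memE2 : (X 0 : MvPolynomial (Fin 2) K) ^ p1 * X 1 ^ ((m + 1) * p1) ∈ J * A :=
      Ideal.mul_mem_mul hx0J hx1A
    have memE3 : (X 0 : MvPolynomial (Fin 2) K) ^ ((m + 1) * p1) * X 1 ^ p1 ∈ J * A := by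
      have h := Ideal.mul_mem_mul hx1J hx0A
      rwa [mul_comm ((X 1 : MvPolynomial (Fin 2) K) ^ p1)] at h
    have memE4 : (X 1 : MvPolynomial (Fin 2) K) ^ ((m + 2) * p1) ∈ J * A := by
      rw [show (m+2)*p1 = p1 + (m+1)*p1 by ring, pow_add]
      exact Ideal.mul_mem_mul hx1J hx1A
    have heq : ((X 0 : MvPolynomial (Fin 2) K) ^ p1) ^ a * (X 1 ^ p1) ^ b =
        ((X 0 : MvPolynomial (Fin 2) K) ^ ((m + 2) * p1)) ^ s *
          (X 0 ^ p1 * X 1 ^ ((m + 1) * p1)) ^ t *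
          (X 0 ^ ((m + 1) * p1) * X 1 ^ p1) ^ u *
          ((X 1 : MvPolynomial (Fin 2) K) ^ ((m + 2) * p1)) ^ v := by
      subst ha hb
      ring
    rw [heq, ← hsum, pow_add, pow_add, pow_add]
    exact Ideal.mul_mem_mul (Ideal.mul_mem_mul (Ideal.mul_mem_mul
      (Ideal.pow_mem_pow memE1 s) (Ideal.pow_mem_pow memE2 t))
      (Ideal.pow_mem_pow memE3 u)) (Ideal.pow_mem_pow memE4 v)
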